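/- For every amplitude A > 0, width L > 0, and scale α > 0, there exists a shape parameter β > 0 such that the L¹ approximation error of the square wave by the generalized exponential function is strictly smaller than that by the scaled Gaussian: ∫_ℝ |S(t) − A·e^{−(|t|/α)^β}| dt < ∫_ℝ |S(t) − A·e^{−t²/α²}| dt. -/

import Mathlib

open MeasureTheory Real Set Filter Topology

section GefAux

lemma aux_gamma_log_bound :
    Real.eulerMascheroniConstant + 2 * Real.log 2 < 2 := by
  have h16 := Real.eulerMascheroniConstant_lt_eulerMascheroniSeq' 16
  have hseq : Real.eulerMascheroniSeq' 16 = (2436559/720720 : ℝ) - Real.log 16 := by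
    rw [Real.eulerMascheroniSeq']
    norm_num [harmonic_succ]
  have hlog16 : Real.log 16 = 4 * Real.log 2 := by
    rw [show (16:ℝ) = 2 ^ (4:ℕ) by norm_num, Real.log_pow]; norm_num
  have h2 := Real.log_two_gt_d9
  rw [hseq, hlog16] at h16
  linarith

lemma aux_gamma_dip : ∃ y : ℝ, 1 < y ∧ y < 3/2 ∧ Real.Gamma y < Real.Gamma (3/2) := by
  set d : ℝ := 1 * Real.Gamma (1/2) +
      (1/2) * (-Real.sqrt π * (Real.eulerMascheroniConstant + 2 * Real.log 2)) with hd_def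
  have hF : HasDerivAt (fun x : ℝ => x * Real.Gamma x) d (1/2) :=
    (hasDerivAt_id (1/2 : ℝ)).mul Real.hasDerivAt_Gamma_one_half
  have hcomp : HasDerivAt (fun x : ℝ => (x - 1) * Real.Gamma (x - 1)) (d * 1) (3/2) := by
    have h1 : HasDerivAt (fun x : ℝ => x - 1) 1 (3/2 : ℝ) := (hasDerivAt_id _).sub_const 1
    have h32 : (3/2 : ℝ) - 1 = 1/2 := by norm_num
    exact HasDerivAt.comp (3/2 : ℝ) (h32 ▸ hF) h1
  have hEq : Real.Gamma =ᶠ[nhds (3/2 : ℝ)] fun x : ℝ => (x - 1) * Real.Gamma (x - 1) := by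
    filter_upwards [eventually_gt_nhds (by norm_num : (1:ℝ) < 3/2)] with x hx
    have hx0 : x - 1 ≠ 0 := by intro h; rw [sub_eq_zero] at h; rw [h] at hx; linarith
    have := Real.Gamma_add_one hx0
    rw [sub_add_cancel] at this
    exact this
  have hG : HasDerivAt Real.Gamma (d * 1) (3/2) := hcomp.congr_of_eventuallyEq hEq
  have hd_pos : 0 < d := by
    have h1 : Real.Gamma (1/2) = Real.sqrt π := Real.Gamma_one_half_eq
    have h2 : (0:ℝ) < Real.sqrt π := Real.sqrt_pos.mpr Real.pi_pos
    have h3 := aux_gamma_log_bound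
    rw [hd_def, h1]
    nlinarith
  rw [mul_one] at hG
  rw [hasDerivAt_iff_tendsto_slope] at hG
  have hev : ∀ᶠ y in nhdsWithin (3/2 : ℝ) {(3/2 : ℝ)}ᶜ, 0 < slope Real.Gamma (3/2) y :=
    hG.eventually (eventually_gt_nhds hd_pos)
  have hle : nhdsWithin (3/2 : ℝ) (Iio (3/2)) ≤ nhdsWithin (3/2 : ℝ) {(3/2 : ℝ)}ᶜ :=
    nhdsWithin_mono _ (fun x hx => ne_of_lt hx)
  have hev2 : ∀ᶠ y in nhdsWithin (3/2 : ℝ) (Iio (3/2)), 1 < y :=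
    eventually_nhdsWithin_of_eventually_nhds (eventually_gt_nhds (by norm_num))
  have hev3 : ∀ᶠ y in nhdsWithin (3/2 : ℝ) (Iio (3/2)), y < 3/2 :=
    eventually_mem_nhdsWithin
  obtain ⟨y, hy1, hy2, hy3⟩ := ((hev.filter_mono hle).and (hev2.and hev3)).exists
  refine ⟨y, hy2, hy3, ?_⟩
  rw [slope_def_field] at hy1
  rcases div_pos_iff.mp hy1 with ⟨h1, h2⟩ | ⟨h1, h2⟩
  · exfalso; linarith
  · linarith

lemma aux_arg (α p : ℝ) (hα : 0 < α) (t : ℝ) :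
    (|t| / α) ^ p = α ^ (-p) * |t| ^ p := by
  rw [Real.div_rpow (abs_nonneg t) hα.le, Real.rpow_neg hα.le]
  ring

lemma aux_integrable {p : ℝ} (hp : 1 ≤ p) {α : ℝ} (hα : 0 < α) :
    Integrable (fun t : ℝ => Real.exp (-((|t| / α) ^ p))) := by
  have hb : (0:ℝ) < α ^ (-p) := Real.rpow_pos_of_pos hα _
  set f : ℝ → ℝ := fun x => Real.exp (-(α ^ (-p)) * x ^ p) with hf
  have h1 : IntegrableOn f (Ioi 0) := by
    have := integrableOn_rpow_mul_exp_neg_mul_rpow (p := p) (s := 0) (b := α ^ (-p))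
      (by norm_num) (by linarith) hb
    refine this.congr_fun (fun x hx => ?_) measurableSet_Ioi
    beta_reduce
    rw [Real.rpow_zero, one_mul]
  have h2 : IntegrableOn (fun x => f |x|) (Ioi 0) :=
    h1.congr_fun (fun x hx => by rw [abs_of_pos hx]) measurableSet_Ioi
  have h3 : IntegrableOn (fun x => f |x|) (Iic 0) := by
    rw [← Measure.map_neg_eq_self (volume : Measure ℝ)]
    have m : MeasurableEmbedding fun x : ℝ => -x := (Homeomorph.neg ℝ).measurableEmbedding
    rw [m.integrableOn_map_iff]
    simp_rw [Function.comp_def, abs_neg, neg_preimage, neg_Iic, neg_zero]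
    exact Iff.mpr integrableOn_Ici_iff_integrableOn_Ioi h2
  have h4 : Integrable (fun x => f |x|) := by
    rw [← integrableOn_univ, ← Set.Iic_union_Ioi (a := (0:ℝ))]
    exact h3.union h2
  refine h4.congr (Filter.Eventually.of_forall (fun t => ?_))
  rw [hf]
  simp only
  rw [aux_arg α p hα t, neg_mul]

lemma aux_integral {p : ℝ} (hp : 0 < p) {α : ℝ} (hα : 0 < α) :
    ∫ t : ℝ, Real.exp (-((|t| / α) ^ p)) = 2 * α * Real.Gamma (1 / p + 1) := by
  have hb : (0:ℝ) < α ^ (-p) := Real.rpow_pos_of_pos hα _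
  have h1 : (fun t : ℝ => Real.exp (-((|t| / α) ^ p)))
      = fun t : ℝ => Real.exp (-(α ^ (-p)) * |t| ^ p) := by
    funext t; rw [aux_arg α p hα t, neg_mul]
  rw [h1, integral_comp_abs (f := fun x => Real.exp (-(α ^ (-p)) * x ^ p)),
    integral_exp_neg_mul_rpow hp hb]
  have h2 : (α ^ (-p) : ℝ) ^ (-1 / p) = α := by
    rw [← Real.rpow_mul hα.le, show -p * (-1/p) = 1 by field_simp, Real.rpow_one]
  rw [h2]; ring

lemma aux_Gamma_add_one_le_one {x : ℝ} (h0 : 0 ≤ x) (h1 : x ≤ 1) :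
    Real.Gamma (x + 1) ≤ 1 := by
  have h := Real.convexOn_Gamma.2 (mem_Ioi.mpr one_pos) (mem_Ioi.mpr two_pos)
    (by linarith : (0:ℝ) ≤ 1 - x) h0 (by ring)
  simp only [smul_eq_mul] at h
  rw [show (1 - x) * 1 + x * 2 = x + 1 by ring] at h
  calc Real.Gamma (x + 1) ≤ (1-x) * Real.Gamma 1 + x * Real.Gamma 2 := h
    _ = 1 := by rw [Real.Gamma_one, Real.Gamma_two]; ring

-- splitting the error integral
lemma aux_split (A α c : ℝ) (hA : 0 < A) (hα : 0 < α) (hc : 0 < c) {p : ℝ} (hp : 1 ≤ p) :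
    (∫ t : ℝ, |(if |t| < c then A else 0) - A * Real.exp (-((|t| / α) ^ p))|)
      = (∫ t in {t : ℝ | |t| < c}, (A - A * Real.exp (-((|t| / α) ^ p))))
        + ∫ t in {t : ℝ | |t| < c}ᶜ, A * Real.exp (-((|t| / α) ^ p)) := by
  have hsIoo : {t : ℝ | |t| < c} = Ioo (-c) c := by ext t; simp [abs_lt]
  have hs : MeasurableSet {t : ℝ | |t| < c} := by rw [hsIoo]; exact measurableSet_Ioo
  have hGint : Integrable (fun t : ℝ => A * Real.exp (-((|t| / α) ^ p))) :=
    (aux_integrable hp hα).const_mul A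
  have hSint : Integrable (fun t : ℝ => if |t| < c then A else 0) := by
    have : (fun t : ℝ => if |t| < c then A else 0)
        = (Ioo (-c) c).indicator (fun _ => A) := by
      funext t; simp [Set.indicator_apply, Set.mem_Ioo, abs_lt]
    rw [this]
    exact (integrableOn_const measure_Ioo_lt_top.ne).integrable_indicator
      measurableSet_Ioo
  have hint : Integrable (fun t : ℝ =>
      |(if |t| < c then A else 0) - A * Real.exp (-((|t| / α) ^ p))|) :=
    (hSint.sub hGint).abs
  rw [← integral_add_compl hs hint]
  congr 1
  · refine setIntegral_congr_fun hs (fun t ht => ?_)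
    have ht' : |t| < c := ht
    rw [if_pos ht']
    have hle : A * Real.exp (-((|t| / α) ^ p)) ≤ A := by
      have h1 : Real.exp (-((|t| / α) ^ p)) ≤ 1 := by
        rw [Real.exp_le_one_iff]
        exact neg_nonpos.mpr (Real.rpow_nonneg (by positivity) p)
      nlinarith
    exact abs_of_nonneg (by linarith)
  · refine setIntegral_congr_fun hs.compl (fun t ht => ?_)
    have ht' : ¬ (|t| < c) := ht
    rw [if_neg ht', zero_sub, abs_neg]
    exact abs_of_nonneg (by positivity)

end GefAux


lemma aux_case1 (A α c : ℝ) (hA : 0 < A) (hα : 0 < α) (hc : 0 < c) (β : ℝ)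
    (hβ2 : 2 < β) (hΓ : Real.Gamma (1/β + 1) < Real.Gamma (1/2 + 1)) (hca : c ≤ α) :
    (∫ t : ℝ, |(if |t| < c then A else 0) - A * Real.exp (-((|t| / α) ^ β))|)
      < ∫ t : ℝ, |(if |t| < c then A else 0) - A * Real.exp (-((|t| / α) ^ (2:ℝ)))| := by
  have hβ1 : (1:ℝ) ≤ β := by linarith
  have h21 : (1:ℝ) ≤ (2:ℝ) := one_le_two
  set s : Set ℝ := {t : ℝ | |t| < c} with hs_def
  have hsIoo : s = Ioo (-c) c := by ext t; simp [hs_def, abs_lt]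
  have hs : MeasurableSet s := by rw [hsIoo]; exact measurableSet_Ioo
  set G : ℝ → ℝ → ℝ := fun p t => A * Real.exp (-((|t| / α) ^ p)) with hG_def
  have hGint : ∀ p : ℝ, 1 ≤ p → Integrable (G p) := fun p hp =>
    (aux_integrable hp hα).const_mul A
  have hGval : ∀ p : ℝ, 1 ≤ p → ∫ t : ℝ, G p t = A * (2 * α * Real.Gamma (1/p + 1)) := by
    intro p hp
    rw [hG_def]
    simp only
    rw [MeasureTheory.integral_const_mul, aux_integral (by linarith : (0:ℝ) < p) hα]
  -- the difference function
  have hD : Integrable (fun t : ℝ => G β t - G 2 t) := (hGint β hβ1).sub (hGint 2 h21)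
  have hJsplit : (∫ t in s, (G β t - G 2 t)) + (∫ t in sᶜ, (G β t - G 2 t))
      = ∫ t : ℝ, (G β t - G 2 t) := integral_add_compl hs hD
  have hJtot : ∫ t : ℝ, (G β t - G 2 t)
      = A * (2 * α * Real.Gamma (1/β + 1)) - A * (2 * α * Real.Gamma (1/2 + 1)) := by
    rw [integral_sub (hGint β hβ1) (hGint 2 h21), hGval β hβ1, hGval 2 h21]
  have hJtot_neg : ∫ t : ℝ, (G β t - G 2 t) < 0 := by
    rw [hJtot]
    nlinarith [mul_pos (mul_pos hA hα) (sub_pos.mpr hΓ)]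
  -- positivity of the inner integral
  have hJ1_pos : 0 < ∫ t in s, (G β t - G 2 t) := by
    have hnonneg : 0 ≤ᵐ[volume.restrict s] (fun t : ℝ => G β t - G 2 t) := by
      rw [EventuallyLE, ae_restrict_iff' hs]
      refine Filter.Eventually.of_forall (fun t ht => ?_)
      have ht' : |t| < c := ht
      have hb0 : 0 ≤ |t| / α := by positivity
      have hb1 : |t| / α < 1 := (div_lt_one hα).mpr (lt_of_lt_of_le ht' hca)
      have hrp : (|t| / α) ^ β ≤ (|t| / α) ^ (2:ℝ) := by
        rcases eq_or_lt_of_le hb0 with h0 | h0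
        · rw [← h0, Real.zero_rpow (by linarith : β ≠ 0),
            Real.zero_rpow (by norm_num : (2:ℝ) ≠ 0)]
        · exact Real.rpow_le_rpow_of_exponent_ge h0 hb1.le (by linarith)
      have := Real.exp_le_exp.mpr (neg_le_neg hrp)
      simp only [hG_def, Pi.zero_apply, sub_nonneg]
      nlinarith
    rw [setIntegral_pos_iff_support_of_nonneg_ae hnonneg hD.integrableOn]
    have hsub : Ioo 0 c ⊆ Function.support (fun t : ℝ => G β t - G 2 t) ∩ s := by
      intro t ht
      obtain ⟨ht0, htc⟩ := ht
      have habs : |t| = t := abs_of_pos ht0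
      have hb0 : 0 < t / α := by positivity
      have hb1 : t / α < 1 := (div_lt_one hα).mpr (lt_of_lt_of_le htc hca)
      have hrp : (t / α) ^ β < (t / α) ^ (2:ℝ) :=
        Real.rpow_lt_rpow_of_exponent_gt hb0 hb1 hβ2
      have hexp := Real.exp_lt_exp.mpr (neg_lt_neg hrp)
      constructor
      · simp only [Function.mem_support, hG_def, habs]
        nlinarith
      · simp only [hs_def, mem_setOf_eq, habs]; exact htc
    calc (0:ENNReal) < ENNReal.ofReal c := by simp [hc]
      _ = volume (Ioo (0:ℝ) c) := by rw [Real.volume_Ioo, sub_zero]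
      _ ≤ _ := measure_mono hsub
  -- assemble
  rw [aux_split A α c hA hα hc hβ1, aux_split A α c hA hα hc h21]
  have hconst : IntegrableOn (fun _ : ℝ => A) s :=
    integrableOn_const (by rw [hsIoo]; exact measure_Ioo_lt_top.ne)
  have e1 : (∫ t in s, (A - G β t)) = (∫ t in s, (A:ℝ)) - ∫ t in s, G β t :=
    integral_sub hconst (hGint β hβ1).integrableOn
  have e2 : (∫ t in s, (A - G 2 t)) = (∫ t in s, (A:ℝ)) - ∫ t in s, G 2 t :=
    integral_sub hconst (hGint 2 h21).integrableOn
  have e3 : (∫ t in s, (G β t - G 2 t)) = (∫ t in s, G β t) - ∫ t in s, G 2 t :=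
    integral_sub (hGint β hβ1).integrableOn (hGint 2 h21).integrableOn
  have e4 : (∫ t in sᶜ, (G β t - G 2 t)) = (∫ t in sᶜ, G β t) - ∫ t in sᶜ, G 2 t :=
    integral_sub (hGint β hβ1).integrableOn (hGint 2 h21).integrableOn
  have goal_eq : ∀ p : ℝ, (∫ t in s, (A - A * Real.exp (-((|t| / α) ^ p))))
      = ∫ t in s, (A - G p t) := fun p => rfl
  rw [goal_eq β, goal_eq 2, e1, e2]
  have h2G : (∫ t in sᶜ, A * Real.exp (-((|t| / α) ^ (2:ℝ)))) = ∫ t in sᶜ, G 2 t := rfl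
  have hβG : (∫ t in sᶜ, A * Real.exp (-((|t| / α) ^ β))) = ∫ t in sᶜ, G β t := rfl
  rw [h2G, hβG]
  rw [e3] at hJ1_pos
  rw [e3, e4] at hJsplit
  linarith [hJtot_neg, hJ1_pos, hJsplit]


lemma aux_case2 (A α c : ℝ) (hA : 0 < A) (hα : 0 < α) (hc : 0 < c) (hac : α ≤ c) :
    (∫ t : ℝ, |(if |t| < c then A else 0) - A * Real.exp (-((|t| / α) ^ (150:ℝ)))|)
      < ∫ t : ℝ, |(if |t| < c then A else 0) - A * Real.exp (-((|t| / α) ^ (2:ℝ)))| := by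
  have hβ1 : (1:ℝ) ≤ (150:ℝ) := by norm_num
  have h21 : (1:ℝ) ≤ (2:ℝ) := one_le_two
  set s : Set ℝ := {t : ℝ | |t| < c} with hs_def
  have hsIoo : s = Ioo (-c) c := by ext t; simp [hs_def, abs_lt]
  have hs : MeasurableSet s := by rw [hsIoo]; exact measurableSet_Ioo
  set G : ℝ → ℝ → ℝ := fun p t => A * Real.exp (-((|t| / α) ^ p)) with hG_def
  have hGint : ∀ p : ℝ, 1 ≤ p → Integrable (G p) := fun p hp =>
    (aux_integrable hp hα).const_mul A
  have hGval : ∀ p : ℝ, 1 ≤ p → ∫ t : ℝ, G p t = A * (2 * α * Real.Gamma (1/p + 1)) := by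
    intro p hp
    rw [hG_def]
    simp only
    rw [MeasureTheory.integral_const_mul, aux_integral (by linarith : (0:ℝ) < p) hα]
  -- value of the Gaussian total integral
  have hW : ∫ t : ℝ, G 2 t = A * α * Real.sqrt π := by
    rw [hGval 2 h21]
    have : Real.Gamma (1/2 + 1) = Real.sqrt π / 2 := by
      rw [Real.Gamma_add_one (by norm_num : (1/2 : ℝ) ≠ 0), Real.Gamma_one_half_eq]
      ring
    rw [this]; ring
  -- upper bound on the GEF total integral
  have hF : ∫ t : ℝ, G 150 t ≤ 2 * α * A := by
    rw [hGval 150 hβ1]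
    have h1 : Real.Gamma (1/150 + 1) ≤ 1 :=
      aux_Gamma_add_one_le_one (by norm_num) (by norm_num)
    nlinarith [mul_pos hA hα]
  -- lower bound for the integral of G 150 over s
  have hMs : 2 * ((24:ℝ)/25) * α * (A * (1 - (24/25:ℝ)^(150:ℕ))) ≤ ∫ t in s, G 150 t := by
    have hq : ((24:ℝ)/25)^(150:ℕ) < 1 := by
      apply pow_lt_one₀ (by norm_num) (by norm_num)
      norm_num
    have hsub : Ioo (-(24/25*α)) (24/25*α) ⊆ s := by
      intro t ht
      obtain ⟨h1, h2⟩ := ht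
      have : |t| < 24/25*α := abs_lt.mpr ⟨by linarith, h2⟩
      simp only [hs_def, mem_setOf_eq]
      nlinarith
    have hstep1 : ∫ t in Ioo (-(24/25*α)) (24/25*α), G 150 t ≤ ∫ t in s, G 150 t := by
      refine setIntegral_mono_set (hGint 150 hβ1).integrableOn ?_ hsub.eventuallyLE
      exact Filter.Eventually.of_forall (fun t => by positivity)
    have hstep2 : 2 * ((24:ℝ)/25) * α * (A * (1 - (24/25:ℝ)^(150:ℕ)))
        ≤ ∫ t in Ioo (-(24/25*α)) (24/25*α), G 150 t := by
      have hconst : ∫ t in Ioo (-(24/25*α)) (24/25*α), (A * (1 - (24/25:ℝ)^(150:ℕ)))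
          = 2 * ((24:ℝ)/25) * α * (A * (1 - (24/25:ℝ)^(150:ℕ))) := by
        rw [setIntegral_const, Real.volume_real_Ioo, smul_eq_mul,
          max_eq_left (by nlinarith : (0:ℝ) ≤ 24/25*α - -(24/25*α))]
        ring
      rw [← hconst]
      refine setIntegral_mono_on
        (integrableOn_const measure_Ioo_lt_top.ne)
        (hGint 150 hβ1).integrableOn measurableSet_Ioo (fun t ht => ?_)
      obtain ⟨h1, h2⟩ := ht
      have habs : |t| ≤ 24/25*α := le_of_lt (abs_lt.mpr ⟨by linarith, h2⟩)
      have hdle : |t| / α ≤ 24/25 := by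
        rw [div_le_iff₀ hα]; nlinarith
      have hrp : (|t| / α) ^ (150:ℝ) ≤ ((24:ℝ)/25) ^ (150:ℝ) :=
        Real.rpow_le_rpow (by positivity) hdle (by norm_num)
      have hcast : ((24:ℝ)/25) ^ (150:ℝ) = ((24:ℝ)/25) ^ (150:ℕ) := by
        rw [show ((150:ℝ)) = ((150:ℕ):ℝ) by norm_num, Real.rpow_natCast]
      have hexp : 1 - ((24:ℝ)/25) ^ (150:ℕ) ≤ Real.exp (-((|t| / α) ^ (150:ℝ))) := by
        have h3 : (1:ℝ) - (|t| / α) ^ (150:ℝ) ≤ Real.exp (-((|t| / α) ^ (150:ℝ))) := by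
          have := Real.add_one_le_exp (-((|t| / α) ^ (150:ℝ)))
          linarith
        rw [hcast] at hrp
        linarith
      simp only [hG_def]
      nlinarith
    linarith
  -- tail bound : ∫ over sᶜ of difference ≤ ∫ over sᶜ of G 150
  have hD : Integrable (fun t : ℝ => G 150 t - G 2 t) := (hGint 150 hβ1).sub (hGint 2 h21)
  have hJ2_le : (∫ t in sᶜ, (G 150 t - G 2 t)) ≤ ∫ t in sᶜ, G 150 t := by
    refine setIntegral_mono_on hD.integrableOn (hGint 150 hβ1).integrableOn
      hs.compl (fun t _ => ?_)
    have : (0:ℝ) ≤ G 2 t := by simp only [hG_def]; positivity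
    linarith
  have hcompl : (∫ t in s, G 150 t) + (∫ t in sᶜ, G 150 t) = ∫ t : ℝ, G 150 t :=
    integral_add_compl hs (hGint 150 hβ1)
  have hJsplit : (∫ t in s, (G 150 t - G 2 t)) + (∫ t in sᶜ, (G 150 t - G 2 t))
      = ∫ t : ℝ, (G 150 t - G 2 t) := integral_add_compl hs hD
  have hJtot : ∫ t : ℝ, (G 150 t - G 2 t) = (∫ t : ℝ, G 150 t) - ∫ t : ℝ, G 2 t :=
    integral_sub (hGint 150 hβ1) (hGint 2 h21)
  -- numeric facts
  have hqnum : ((24:ℝ)/25)^(150:ℕ) < 1/400 := by norm_num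
  have hπ : Real.sqrt π < 1.7725 := by
    rw [show (1.7725:ℝ) = Real.sqrt (1.7725^2) from (Real.sqrt_sq (by norm_num)).symm]
    apply Real.sqrt_lt_sqrt Real.pi_pos.le
    nlinarith [Real.pi_lt_d6]
  -- assemble
  rw [aux_split A α c hA hα hc hβ1, aux_split A α c hA hα hc h21]
  have hconst : IntegrableOn (fun _ : ℝ => A) s :=
    integrableOn_const (by rw [hsIoo]; exact measure_Ioo_lt_top.ne)
  have e1 : (∫ t in s, (A - G 150 t)) = (∫ t in s, (A:ℝ)) - ∫ t in s, G 150 t :=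
    integral_sub hconst (hGint 150 hβ1).integrableOn
  have e2 : (∫ t in s, (A - G 2 t)) = (∫ t in s, (A:ℝ)) - ∫ t in s, G 2 t :=
    integral_sub hconst (hGint 2 h21).integrableOn
  have e3 : (∫ t in s, (G 150 t - G 2 t)) = (∫ t in s, G 150 t) - ∫ t in s, G 2 t :=
    integral_sub (hGint 150 hβ1).integrableOn (hGint 2 h21).integrableOn
  have e4 : (∫ t in sᶜ, (G 150 t - G 2 t)) = (∫ t in sᶜ, G 150 t) - ∫ t in sᶜ, G 2 t :=
    integral_sub (hGint 150 hβ1).integrableOn (hGint 2 h21).integrableOn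
  have goal_eq : ∀ p : ℝ, (∫ t in s, (A - A * Real.exp (-((|t| / α) ^ p))))
      = ∫ t in s, (A - G p t) := fun p => rfl
  rw [goal_eq 150, goal_eq 2, e1, e2]
  have h2G : (∫ t in sᶜ, A * Real.exp (-((|t| / α) ^ (2:ℝ)))) = ∫ t in sᶜ, G 2 t := rfl
  have hβG : (∫ t in sᶜ, A * Real.exp (-((|t| / α) ^ (150:ℝ)))) = ∫ t in sᶜ, G 150 t := rfl
  rw [h2G, hβG]
  rw [e3, e4] at hJsplit
  rw [hJtot, hW] at hJsplit
  -- final arithmetic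
  nlinarith [mul_pos hA hα, hJ2_le, hJsplit, hcompl, hF, hMs, hqnum, hπ,
    mul_pos (mul_pos hA hα) (sub_pos.mpr hπ)]



/-- **GEF beats Gaussian on square waves.**
For every amplitude `A > 0`, width `L > 0`, and scale `α > 0`, there exists a shape
parameter `β > 0` such that the L¹ approximation error of the square wave
`S t = A` for `|t| < L/2`, `0` otherwise, by the generalized exponential function
`t ↦ A · exp (−(|t|/α)^β)` is strictly smaller than that by the scaled Gaussian
`t ↦ A · exp (−t²/α²)`. -/
theorem gef_beats_gaussian_on_square_wave
    (A L α : ℝ) (hA : 0 < A) (hL : 0 < L) (hα : 0 < α) :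
    ∃ β : ℝ, 0 < β ∧
      (∫ t : ℝ, |(if |t| < L / 2 then A else 0) - A * Real.exp (-((|t| / α) ^ β))|) <
      (∫ t : ℝ, |(if |t| < L / 2 then A else 0) - A * Real.exp (-(t ^ 2 / α ^ 2))|) := by
  have hc : 0 < L / 2 := by linarith
  have hgauss : ∀ t : ℝ, A * Real.exp (-(t ^ 2 / α ^ 2))
      = A * Real.exp (-((|t| / α) ^ (2:ℝ))) := by
    intro t
    congr 1
    rw [show ((2:ℝ)) = ((2:ℕ):ℝ) by norm_num, Real.rpow_natCast, div_pow, sq_abs]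
  simp only [hgauss]
  by_cases hca : L / 2 ≤ α
  · obtain ⟨y, hy1, hy2, hyΓ⟩ := aux_gamma_dip
    have hy0 : 0 < y - 1 := by linarith
    refine ⟨1 / (y - 1), by positivity, ?_⟩
    have hβ2 : 2 < 1 / (y - 1) := by
      rw [lt_div_iff₀ hy0]; linarith
    have h1β : 1 / (1 / (y - 1)) + 1 = y := by
      rw [one_div_one_div]; ring
    have hΓ : Real.Gamma (1 / (1 / (y - 1)) + 1) < Real.Gamma (1/2 + 1) := by
      rw [h1β, show (1/2 + 1 : ℝ) = 3/2 by norm_num]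
      exact hyΓ
    exact aux_case1 A α (L/2) hA hα hc (1/(y-1)) hβ2 hΓ hca
  · push_neg at hca
    exact ⟨150, by norm_num, aux_case2 A α (L/2) hA hα hc hca.le⟩
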